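/- With the notation of the previous construction (γ ∈ ((d-1)/d,1), m with mγ ≥ 1, m(1−γ) ≥ 4, g_j and partial sums f_n = Σ_{j=0}^n 2^{−γjm} g_j, f_{−1} ≡ 0): for every n ∈ ℕ₀, every k ∈ {0,…,2^{nm}−1}^{d-1}, and all x', y' in the cube Q(n,k) = {x' : 2^{nm}x' − k ∈ (0,1)^{d-1}}, one has |f_{n−1}(x') − f_{n−1}(y')| ≤ (1/8)·2^{−γmn}. -/

import Mathlib

/-- The tent function `ψ(x') = (1/2 − ‖x' − (1/2,…,1/2)‖_∞)·1_{(0,1)^{n}}(x')`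
(the norm on `Fin n → ℝ` is the sup norm). -/
noncomputable def sawPsi (n : ℕ) (x : Fin n → ℝ) : ℝ :=
  Set.indicator {y : Fin n → ℝ | ∀ i, 0 < y i ∧ y i < 1}
    (fun y => 1 / 2 - ‖y - fun _ => (1 / 2 : ℝ)‖) x

/-- `g_j(x') = Σ_{k ∈ {0,…,2^{jm}−1}^{n}} ψ(2^{jm}·x' − k)`. -/
noncomputable def sawG (n m j : ℕ) (x : Fin n → ℝ) : ℝ :=
  ∑ k : Fin n → Fin (2 ^ (j * m)),
    sawPsi n (fun i => 2 ^ (j * m) * x i - (k i : ℝ))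

/-- Partial sum `f_{N−1}(x') = Σ_{j=0}^{N−1} 2^{−γjm}·g_j(x')` (so `sawF n m γ 0 = f_{−1} ≡ 0`). -/
noncomputable def sawFpartial (n m : ℕ) (γ : ℝ) (N : ℕ) (x : Fin n → ℝ) : ℝ :=
  ∑ j ∈ Finset.range N, (2 : ℝ) ^ (-(γ * ((j : ℝ) * m))) * sawG n m j x

/-- The sawtooth boundary function `f(x') = Σ_{j=0}^∞ 2^{−γjm}·g_j(x')`. -/
noncomputable def sawF (n m : ℕ) (γ : ℝ) (x : Fin n → ℝ) : ℝ :=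
  ∑' j : ℕ, (2 : ℝ) ^ (-(γ * ((j : ℝ) * m))) * sawG n m j x

/-- The dyadic subcube `Q(n,k) = {x' : 2^{nm}·x' − k ∈ (0,1)^{d-1}}`. -/
def sawQ (dd m n : ℕ) (k : Fin dd → Fin (2 ^ (n * m))) : Set (Fin dd → ℝ) :=
  {x | ∀ i, (k i : ℝ) < 2 ^ (n * m) * x i ∧ 2 ^ (n * m) * x i < (k i : ℝ) + 1}

/-- `a_{n,k} = sup_{x' ∈ Q(n,k)} f_{n−1}(x')`. -/
noncomputable def sawA (dd m : ℕ) (γ : ℝ) (n : ℕ) (k : Fin dd → Fin (2 ^ (n * m))) : ℝ :=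
  sSup (sawFpartial dd m γ n '' sawQ dd m n k)

lemma sawPsi_lip {dd : ℕ} {a b : Fin dd → ℝ} (ha : ∀ i, 0 < a i ∧ a i < 1)
    (hb : ∀ i, 0 < b i ∧ b i < 1) :
    |sawPsi dd a - sawPsi dd b| ≤ ‖a - b‖ := by
  unfold sawPsi
  rw [Set.indicator_of_mem (show a ∈ {y : Fin dd → ℝ | ∀ i, 0 < y i ∧ y i < 1} from ha),
    Set.indicator_of_mem (show b ∈ {y : Fin dd → ℝ | ∀ i, 0 < y i ∧ y i < 1} from hb)]
  set c : Fin dd → ℝ := fun _ => (1/2 : ℝ)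
  have h1 : (1/2 - ‖a - c‖) - (1/2 - ‖b - c‖) = ‖b - c‖ - ‖a - c‖ := by ring
  rw [h1]
  calc |‖b - c‖ - ‖a - c‖| ≤ ‖(b - c) - (a - c)‖ := abs_norm_sub_norm_le _ _
    _ = ‖a - b‖ := by rw [show (b - c) - (a - c) = -(a - b) by abel, norm_neg]

lemma sawG_diff {dd m n j : ℕ} (hj : j ≤ n) (k : Fin dd → Fin (2 ^ (n * m)))
    {x y : Fin dd → ℝ} (hx : x ∈ sawQ dd m n k) (hy : y ∈ sawQ dd m n k) :
    |sawG dd m j x - sawG dd m j y| ≤ 2 ^ (j * m) * ‖x - y‖ := by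
  set p := (n - j) * m with hp
  have hsplit : n * m = j * m + p := by
    rw [hp]; rw [← Nat.add_mul]; congr 1; omega
  have hppos : 0 < 2 ^ p := Nat.pow_pos (by norm_num)
  -- the level-j cube index
  have hKlt : ∀ i, (k i : ℕ) / 2 ^ p < 2 ^ (j * m) := by
    intro i
    rw [Nat.div_lt_iff_lt_mul hppos, ← pow_add, ← hsplit]
    exact (k i).2
  set K : Fin dd → Fin (2 ^ (j * m)) := fun i => ⟨(k i : ℕ) / 2 ^ p, hKlt i⟩ with hK
  have key : ∀ {z : Fin dd → ℝ}, z ∈ sawQ dd m n k →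
      ∀ i, ((K i : ℕ) : ℝ) < 2 ^ (j * m) * z i ∧ 2 ^ (j * m) * z i < (K i : ℕ) + 1 := by
    intro z hz i
    obtain ⟨h1, h2⟩ := hz i
    have e : (2 : ℝ) ^ (n * m) = 2 ^ (j * m) * 2 ^ p := by rw [hsplit, pow_add]
    have hpR : (0 : ℝ) < 2 ^ p := by positivity
    have hlow : ((K i : ℕ) : ℝ) * 2 ^ p ≤ (k i : ℝ) := by
      have : (K i : ℕ) * 2 ^ p ≤ (k i : ℕ) := Nat.div_mul_le_self _ _
      exact_mod_cast this
    have hhigh : (k i : ℝ) + 1 ≤ (((K i : ℕ) : ℝ) + 1) * 2 ^ p := by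
      have : (k i : ℕ) + 1 ≤ ((k i : ℕ) / 2 ^ p + 1) * 2 ^ p := by
        have h1 := Nat.div_add_mod (k i : ℕ) (2 ^ p)
        have h2 := Nat.mod_lt (k i : ℕ) hppos
        nlinarith [Nat.div_mul_le_self (k i : ℕ) (2 ^ p)]
      exact_mod_cast this
    have e2 : (2 ^ (j * m) * z i) * 2 ^ p = (2 : ℝ) ^ (n * m) * z i := by rw [e]; ring
    constructor
    · have : ((K i : ℕ) : ℝ) * 2 ^ p < (2 ^ (j * m) * z i) * 2 ^ p := by
        rw [e2]; exact lt_of_le_of_lt hlow h1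
      exact lt_of_mul_lt_mul_right this (le_of_lt hpR)
    · have : (2 ^ (j * m) * z i) * 2 ^ p < (((K i : ℕ) : ℝ) + 1) * 2 ^ p := by
        rw [e2]; exact lt_of_lt_of_le h2 hhigh
      exact lt_of_mul_lt_mul_right this (le_of_lt hpR)
  have vanish : ∀ {z : Fin dd → ℝ}, z ∈ sawQ dd m n k →
      ∀ k' : Fin dd → Fin (2 ^ (j * m)), k' ≠ K →
      sawPsi dd (fun i => 2 ^ (j * m) * z i - (k' i : ℝ)) = 0 := by
    intro z hz k' hk'
    apply Set.indicator_of_notMem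
    intro hmem
    apply hk'
    funext i
    obtain ⟨hl, hr⟩ := hmem i
    obtain ⟨hl2, hr2⟩ := key hz i
    have : (k' i : ℕ) = (K i : ℕ) := by
      by_contra hne
      rcases Nat.lt_or_ge (k' i : ℕ) (K i : ℕ) with h | h
      · have : ((k' i : ℕ) : ℝ) + 1 ≤ ((K i : ℕ) : ℝ) := by exact_mod_cast h
        simp only at hr
        linarith
      · have h' : (K i : ℕ) < (k' i : ℕ) := lt_of_le_of_ne h (Ne.symm hne)
        have : ((K i : ℕ) : ℝ) + 1 ≤ ((k' i : ℕ) : ℝ) := by exact_mod_cast h'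
        simp only at hl
        linarith
    exact Fin.ext this
  have hgx : sawG dd m j x = sawPsi dd (fun i => 2 ^ (j * m) * x i - (K i : ℝ)) := by
    unfold sawG
    exact Finset.sum_eq_single_of_mem K (Finset.mem_univ K)
      (fun b _ hb => vanish hx b hb)
  have hgy : sawG dd m j y = sawPsi dd (fun i => 2 ^ (j * m) * y i - (K i : ℝ)) := by
    unfold sawG
    exact Finset.sum_eq_single_of_mem K (Finset.mem_univ K)
      (fun b _ hb => vanish hy b hb)
  rw [hgx, hgy]
  have hlip := sawPsi_lip (a := fun i => 2 ^ (j * m) * x i - (K i : ℝ))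
    (b := fun i => 2 ^ (j * m) * y i - (K i : ℝ))
    (fun i => by have := key hx i; constructor <;> linarith [this.1, this.2])
    (fun i => by have := key hy i; constructor <;> linarith [this.1, this.2])
  refine hlip.trans (le_of_eq ?_)
  have : (fun i => 2 ^ (j * m) * x i - (K i : ℝ)) - (fun i => 2 ^ (j * m) * y i - (K i : ℝ))
      = ((2 : ℝ) ^ (j * m)) • (x - y) := by
    funext i; simp [Pi.sub_apply]; ring
  rw [this, norm_smul]
  simp

lemma sawQ_dist {dd m n : ℕ} (k : Fin dd → Fin (2 ^ (n * m)))
    {x y : Fin dd → ℝ} (hx : x ∈ sawQ dd m n k) (hy : y ∈ sawQ dd m n k) :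
    ‖x - y‖ ≤ ((2 : ℝ) ^ (n * m))⁻¹ := by
  rw [pi_norm_le_iff_of_nonneg (by positivity)]
  intro i
  obtain ⟨hx1, hx2⟩ := hx i
  obtain ⟨hy1, hy2⟩ := hy i
  have h2 : (0 : ℝ) < 2 ^ (n * m) := by positivity
  have key : 2 ^ (n * m) * (x i - y i) ≤ 1 ∧ 2 ^ (n * m) * (y i - x i) ≤ 1 := by
    constructor <;> nlinarith
  have inv1 : 2 ^ (n * m) * ((2:ℝ) ^ (n * m))⁻¹ = 1 := mul_inv_cancel₀ h2.ne'
  rw [Pi.sub_apply, Real.norm_eq_abs, abs_le]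
  constructor
  · nlinarith [key.1, key.2, inv1]
  · nlinarith [key.1, key.2, inv1]

/-- Lemma 7.2(ii): on each dyadic subcube `Q(n,k)`, the partial sum
`f_{n−1}` oscillates by at most `(1/8)·2^{−γmn}`. -/
theorem sawFpartial_osc (d m : ℕ) (γ : ℝ) (hd : 2 ≤ d)
    (hγ1 : ((d : ℝ) - 1) / d < γ) (hγ2 : γ < 1)
    (hm1 : 1 ≤ (m : ℝ) * γ) (hm2 : 4 ≤ (m : ℝ) * (1 - γ))
    (n : ℕ) (k : Fin (d - 1) → Fin (2 ^ (n * m)))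
    (x y : Fin (d - 1) → ℝ)
    (hx : x ∈ sawQ (d - 1) m n k) (hy : y ∈ sawQ (d - 1) m n k) :
    |sawFpartial (d - 1) m γ n x - sawFpartial (d - 1) m γ n y| ≤
      (1 / 8) * (2 : ℝ) ^ (-(γ * ((m : ℝ) * n))) := by
  set r : ℝ := (2 : ℝ) ^ (((1 - γ) * (m : ℝ))) with hr_def
  have hr16 : (16 : ℝ) ≤ r := by
    calc (16 : ℝ) = (2 : ℝ) ^ ((4 : ℕ) : ℝ) := by rw [Real.rpow_natCast]; norm_num
      _ ≤ r := Real.rpow_le_rpow_of_exponent_le one_le_two (by push_cast; nlinarith)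
  have hrpos : (0 : ℝ) < r := by linarith
  have hbound : ∀ j ∈ Finset.range n,
      |(2 : ℝ) ^ (-(γ * ((j : ℝ) * m))) * sawG (d-1) m j x
        - (2 : ℝ) ^ (-(γ * ((j : ℝ) * m))) * sawG (d-1) m j y|
      ≤ ((2 : ℝ) ^ (n * m))⁻¹ * r ^ j := by
    intro j hj
    have hjn : j ≤ n := le_of_lt (Finset.mem_range.mp hj)
    have hc : (0 : ℝ) < (2 : ℝ) ^ (-(γ * ((j : ℝ) * m))) :=
      Real.rpow_pos_of_pos (by norm_num) _
    rw [← mul_sub, abs_mul, abs_of_pos hc]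
    have h1 := sawG_diff hjn k hx hy
    have h2 := sawQ_dist k hx hy
    have h3 : |sawG (d-1) m j x - sawG (d-1) m j y| ≤ 2 ^ (j * m) * ((2:ℝ) ^ (n * m))⁻¹ := by
      refine h1.trans ?_
      have : (0:ℝ) ≤ 2 ^ (j * m) := by positivity
      exact mul_le_mul_of_nonneg_left h2 this
    calc (2 : ℝ) ^ (-(γ * ((j : ℝ) * m))) * |sawG (d-1) m j x - sawG (d-1) m j y|
        ≤ (2 : ℝ) ^ (-(γ * ((j : ℝ) * m))) * (2 ^ (j * m) * ((2:ℝ) ^ (n * m))⁻¹) :=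
          mul_le_mul_of_nonneg_left h3 (le_of_lt hc)
      _ = ((2 : ℝ) ^ (n * m))⁻¹ * ((2 : ℝ) ^ (-(γ * ((j : ℝ) * m))) * 2 ^ (j * m)) := by ring
      _ = ((2 : ℝ) ^ (n * m))⁻¹ * r ^ j := by
          congr 1
          rw [hr_def, ← Real.rpow_natCast (2:ℝ) (j * m),
            ← Real.rpow_add (by norm_num : (0:ℝ) < 2),
            ← Real.rpow_natCast ((2:ℝ) ^ ((1 - γ) * (m:ℝ))) j,
            ← Real.rpow_mul (by norm_num : (0:ℝ) ≤ 2)]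
          congr 1
          push_cast
          ring
  have hsum : |sawFpartial (d-1) m γ n x - sawFpartial (d-1) m γ n y|
      ≤ ((2 : ℝ) ^ (n * m))⁻¹ * ∑ j ∈ Finset.range n, r ^ j := by
    unfold sawFpartial
    rw [← Finset.sum_sub_distrib, Finset.mul_sum]
    exact (Finset.abs_sum_le_sum_abs _ _).trans (Finset.sum_le_sum hbound)
  refine hsum.trans ?_
  have hgeom : ∑ j ∈ Finset.range n, r ^ j ≤ (1 / 8) * r ^ n := by
    rw [geom_sum_eq (by linarith : r ≠ 1)]
    rw [div_le_iff₀ (by linarith : (0:ℝ) < r - 1)]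
    nlinarith [pow_pos hrpos n]
  have hfin : ((2 : ℝ) ^ (n * m))⁻¹ * r ^ n = (2 : ℝ) ^ (-(γ * ((m : ℝ) * n))) := by
    rw [hr_def, ← Real.rpow_natCast (2:ℝ) (n * m), ← Real.rpow_neg (by norm_num : (0:ℝ) ≤ 2),
      ← Real.rpow_natCast ((2:ℝ) ^ ((1 - γ) * (m:ℝ))) n,
      ← Real.rpow_mul (by norm_num : (0:ℝ) ≤ 2),
      ← Real.rpow_add (by norm_num : (0:ℝ) < 2)]
    congr 1
    push_cast
    ring
  calc ((2 : ℝ) ^ (n * m))⁻¹ * ∑ j ∈ Finset.range n, r ^ j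
      ≤ ((2 : ℝ) ^ (n * m))⁻¹ * ((1/8) * r ^ n) :=
        mul_le_mul_of_nonneg_left hgeom (by positivity)
    _ = (1/8) * (((2 : ℝ) ^ (n * m))⁻¹ * r ^ n) := by ring
    _ = (1 / 8) * (2 : ℝ) ^ (-(γ * ((m : ℝ) * n))) := by rw [hfin]
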